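/- arXiv:0904.0328 — 2 statements merged into one kernel-verified Lean document; each statement's English description precedes it below -/
import Mathlib

section
/- For every m ≥ 1, 7·((B^(m−1)).mulVec ![0,1,0,0]) 3 = 2^m + u(m), where u(m) = −1 if m ≡ 0 (mod 3), u(m) = −2 if m ≡ 1 (mod 3), and u(m) = −4 if m ≡ 2 (mod 3). -/
def B : Matrix (Fin 4) (Fin 4) ℤ :=
  !![0, 0, 0, 1; 0, 1, 1, 0; 2, 1, 0, 0; 0, 0, 1, 1]

lemma key (k : ℕ) :
    7 * ((B ^ k).mulVec ![0, 1, 0, 0]) 0 =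
      (if k % 3 = 0 then 2 ^ k - 1 else if k % 3 = 1 then 2 ^ k - 2 else 2 ^ k - 4) ∧
    7 * ((B ^ k).mulVec ![0, 1, 0, 0]) 1 =
      (if k % 3 = 0 then 2 ^ (k+1) + 5 else if k % 3 = 1 then 2 ^ (k+1) + 3 else 2 ^ (k+1) + 6) ∧
    7 * ((B ^ k).mulVec ![0, 1, 0, 0]) 2 =
      (if k % 3 = 0 then 2 ^ (k+1) - 2 else if k % 3 = 1 then 2 ^ (k+1) + 3 else 2 ^ (k+1) - 1) ∧
    7 * ((B ^ k).mulVec ![0, 1, 0, 0]) 3 =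
      (if k % 3 = 0 then 2 ^ (k+1) - 2 else if k % 3 = 1 then 2 ^ (k+1) - 4 else 2 ^ (k+1) - 1) := by
  induction k with
  | zero => simp [Matrix.mulVec, dotProduct, Fin.sum_univ_four, Matrix.one_apply]
  | succ k ih =>
    obtain ⟨h0, h1, h2, h3⟩ := ih
    have hstep : (B ^ (k+1)).mulVec ![0, 1, 0, 0] =
        B.mulVec ((B ^ k).mulVec ![0, 1, 0, 0]) := by
      rw [pow_succ', Matrix.mulVec_mulVec]
    rw [hstep]
    set w := (B ^ k).mulVec ![0, 1, 0, 0] with hw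
    have e0 : B.mulVec w 0 = w 3 := by
      simp [B, Matrix.mulVec, dotProduct, Fin.sum_univ_four]
    have e1 : B.mulVec w 1 = w 1 + w 2 := by
      simp [B, Matrix.mulVec, dotProduct, Fin.sum_univ_four]
    have e2 : B.mulVec w 2 = 2 * w 0 + w 1 := by
      simp [B, Matrix.mulVec, dotProduct, Fin.sum_univ_four]
    have e3 : B.mulVec w 3 = w 2 + w 3 := by
      simp [B, Matrix.mulVec, dotProduct, Fin.sum_univ_four]
    rw [e0, e1, e2, e3]
    have hp1 : (2:ℤ) ^ (k+1) = 2 * 2 ^ k := by ring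
    have hp2 : (2:ℤ) ^ (k+1+1) = 4 * 2 ^ k := by ring
    obtain h | h | h : k % 3 = 0 ∨ k % 3 = 1 ∨ k % 3 = 2 := by omega
    · have h' : (k+1) % 3 = 1 := by omega
      simp only [h, h'] at *
      norm_num at *
      refine ⟨by linarith, by linarith, by linarith, by linarith⟩
    · have h' : (k+1) % 3 = 2 := by omega
      simp only [h, h'] at *
      norm_num at *
      refine ⟨by linarith, by linarith, by linarith, by linarith⟩
    · have h' : (k+1) % 3 = 0 := by omega
      simp only [h, h'] at *
      norm_num at *
      refine ⟨by linarith, by linarith, by linarith, by linarith⟩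

theorem count_s37_c1 (m : ℕ) (hm : 1 ≤ m) :
    7 * ((B ^ (m - 1)).mulVec ![0, 1, 0, 0]) 3 =
      2 ^ m + (if m % 3 = 0 then -1 else if m % 3 = 1 then -2 else -4) := by
  obtain ⟨k, rfl⟩ : ∃ k, m = k + 1 := ⟨m - 1, by omega⟩
  have h := (key k).2.2.2
  simp only [Nat.add_sub_cancel]
  rw [h]
  obtain h | h | h : k % 3 = 0 ∨ k % 3 = 1 ∨ k % 3 = 2 := by omega
  · have h' : (k+1) % 3 = 1 := by omega
    simp only [h, h']; norm_num; ring
  · have h' : (k+1) % 3 = 2 := by omega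
    simp only [h, h']; norm_num; ring
  · have h' : (k+1) % 3 = 0 := by omega
    simp only [h, h']; norm_num; ring
end

section
/- Define b : ℕ → ℤ by b m = ((B^(m−3)).mulVec ![0,0,0,1]) 2 for m ≥ 3 and b m = 0 for m < 3. Then for every m ≥ 1, 21·( 2·( ((A^(m−1)).mulVec ![0,0,1]) 1 + ((A^(m−1)).mulVec ![0,0,1]) 2 ) + ((B^(m−1)).mulVec ![0,0,0,1]) 3 + ∑_{k=0}^{⌊m/2⌋} b (m − 2k) ) = 22·2^m + τ(m), where τ(m) = −43, 19, 17, −29, 5, 31 according as m ≡ 0, 1, 2, 3, 4, 5 (mod 6). -/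
def A : Matrix (Fin 3) (Fin 3) ℤ := !![0, 1, 0; 0, 0, 1; 2, 1, 1]

def b (m : ℕ) : ℤ :=
  if 3 ≤ m then ((B ^ (m - 3)).mulVec ![0, 0, 0, 1]) 2 else 0

/-- periodic part for the A-orbit -/
def ρ (n : ℕ) : ℤ := if n % 3 = 0 then -1 else if n % 3 = 1 then -2 else 3
def s0 (n : ℕ) : ℤ := if n % 3 = 0 then -1 else if n % 3 = 1 then 5 else 3
def s1 (n : ℕ) : ℤ := if n % 3 = 0 then -2 else if n % 3 = 1 then -4 else -8
def s2 (n : ℕ) : ℤ := if n % 3 = 0 then -2 else if n % 3 = 1 then -4 else 6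
def s3 (n : ℕ) : ℤ := if n % 3 = 0 then 5 else if n % 3 = 1 then 3 else -1
def pp (m : ℕ) : ℤ := if m % 6 = 1 then -2 else if m % 6 = 2 then -4 else
  if m % 6 = 3 then -8 else if m % 6 = 4 then -16 else if m % 6 = 5 then 10 else -22

lemma A_mulVec (w : Fin 3 → ℤ) :
    A.mulVec w = ![w 1, w 2, 2 * w 0 + w 1 + w 2] := by
  funext i
  fin_cases i <;>
    simp [A, Matrix.mulVec, dotProduct, Fin.sum_univ_succ] <;> ring

lemma B_mulVec (w : Fin 4 → ℤ) :
    B.mulVec w = ![w 3, w 1 + w 2, 2 * w 0 + w 1, w 2 + w 3] := by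
  funext i
  fin_cases i <;>
    simp [B, Matrix.mulVec, dotProduct, Fin.sum_univ_succ,
      show (Fin.succ 2 : Fin 4) = 3 from rfl] <;> ring

lemma PA (n : ℕ) :
    7 * ((A ^ n).mulVec ![0, 0, 1]) 0 = 2 ^ n + ρ n ∧
    7 * ((A ^ n).mulVec ![0, 0, 1]) 1 = 2 ^ (n + 1) + ρ (n + 1) ∧
    7 * ((A ^ n).mulVec ![0, 0, 1]) 2 = 2 ^ (n + 2) + ρ (n + 2) := by
  induction n with
  | zero => norm_num [ρ] <;> rfl
  | succ n ih =>
    obtain ⟨h0, h1, h2⟩ := ih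
    rw [pow_succ', ← Matrix.mulVec_mulVec, A_mulVec]
    have h3 : n % 3 = 0 ∨ n % 3 = 1 ∨ n % 3 = 2 := by omega
    refine ⟨?_, ?_, ?_⟩
    · simpa using h1
    · simpa using h2
    · simp only [Matrix.cons_val_two, Matrix.tail_cons, Matrix.head_cons]
      have : 7 * (2 * ((A ^ n).mulVec ![0, 0, 1]) 0 + ((A ^ n).mulVec ![0, 0, 1]) 1 +
          ((A ^ n).mulVec ![0, 0, 1]) 2) =
          2 * (2 ^ n + ρ n) + (2 ^ (n + 1) + ρ (n + 1)) + (2 ^ (n + 2) + ρ (n + 2)) := by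
        rw [← h0, ← h1, ← h2]; ring
      rw [this]
      have hρ : ρ (n + 3) = 2 * ρ n + ρ (n + 1) + ρ (n + 2) := by
        rcases h3 with h | h | h <;>
          simp only [ρ, h, show (n+1) % 3 = (n%3+1)%3 by omega,
            show (n+2) % 3 = (n%3+2)%3 by omega,
            show (n+3) % 3 = n%3 by omega] <;> norm_num [h]
      rw [show n + 1 + 2 = n + 3 from rfl, hρ]; ring

lemma PB (n : ℕ) :
    7 * ((B ^ n).mulVec ![0, 0, 0, 1]) 0 = 2 ^ n + s0 n ∧
    7 * ((B ^ n).mulVec ![0, 0, 0, 1]) 1 = 2 ^ (n + 1) + s1 n ∧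
    7 * ((B ^ n).mulVec ![0, 0, 0, 1]) 2 = 2 ^ (n + 1) + s2 n ∧
    7 * ((B ^ n).mulVec ![0, 0, 0, 1]) 3 = 2 ^ (n + 1) + s3 n := by
  induction n with
  | zero => norm_num [s0, s1, s2, s3] <;> exact ⟨rfl, rfl⟩
  | succ n ih =>
    obtain ⟨h0, h1, h2, h3⟩ := ih
    rw [pow_succ', ← Matrix.mulVec_mulVec, B_mulVec]
    have hc : n % 3 = 0 ∨ n % 3 = 1 ∨ n % 3 = 2 := by omega
    have e1 : (n + 1) % 3 = (n % 3 + 1) % 3 := by omega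
    refine ⟨?_, ?_, ?_, ?_⟩
    · simp only [Matrix.cons_val_zero]
      have hs : s0 (n + 1) = s3 n := by
        rcases hc with h | h | h <;> simp [s0, s3, h, e1]
      rw [hs]; simpa using h3
    · simp only [Matrix.cons_val_one, Matrix.cons_val_zero, Matrix.head_cons]
      have hs : s1 (n + 1) = s1 n + s2 n := by
        rcases hc with h | h | h <;> simp [s1, s2, h, e1]
      rw [show (7:ℤ) * (((B ^ n).mulVec ![0,0,0,1]) 1 + ((B ^ n).mulVec ![0,0,0,1]) 2)
          = (2 ^ (n + 1) + s1 n) + (2 ^ (n + 1) + s2 n) by rw [← h1, ← h2]; ring, hs]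
      ring
    · simp only [Matrix.cons_val_two, Matrix.tail_cons, Matrix.head_cons]
      have hs : s2 (n + 1) = 2 * s0 n + s1 n := by
        rcases hc with h | h | h <;> simp [s0, s1, s2, h, e1] <;> norm_num
      rw [show (7:ℤ) * (2 * ((B ^ n).mulVec ![0,0,0,1]) 0 + ((B ^ n).mulVec ![0,0,0,1]) 1)
          = 2 * (2 ^ n + s0 n) + (2 ^ (n + 1) + s1 n) by rw [← h0, ← h1]; ring, hs]
      ring
    · simp only [Matrix.cons_val_three, Matrix.tail_cons, Matrix.head_cons]
      have hs : s3 (n + 1) = s2 n + s3 n := by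
        rcases hc with h | h | h <;> simp [s2, s3, h, e1] <;> norm_num
      rw [show (7:ℤ) * (((B ^ n).mulVec ![0,0,0,1]) 2 + ((B ^ n).mulVec ![0,0,0,1]) 3)
          = (2 ^ (n + 1) + s2 n) + (2 ^ (n + 1) + s3 n) by rw [← h2, ← h3]; ring, hs]
      ring

lemma b_eq (m : ℕ) (hm : 3 ≤ m) : 21 * b m = 3 * 2 ^ (m - 2) + 3 * s2 m := by
  have h2 := (PB (m - 3)).2.2.1
  have hs : s2 (m - 3) = s2 m := by
    simp only [s2, show (m - 3) % 3 = m % 3 by omega]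
  rw [b, if_pos hm]
  have : (21 : ℤ) * ((B ^ (m - 3)).mulVec ![0, 0, 0, 1]) 2
      = 3 * (7 * ((B ^ (m - 3)).mulVec ![0, 0, 0, 1]) 2) := by ring
  rw [this, h2, hs, show m - 3 + 1 = m - 2 by omega]
  ring

lemma pp_step (m : ℕ) : pp (m + 2) = pp m + 3 * s2 (m + 2) := by
  have hc : m % 6 = 0 ∨ m % 6 = 1 ∨ m % 6 = 2 ∨ m % 6 = 3 ∨ m % 6 = 4 ∨ m % 6 = 5 := by omega
  rcases hc with h | h | h | h | h | h <;>
    simp [pp, s2, h, show (m+2) % 6 = (m%6+2) % 6 by omega,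
      show (m+2) % 3 = (m%6+2) % 3 by omega] <;> norm_num

lemma LS : ∀ m : ℕ, 1 ≤ m →
    21 * (∑ k ∈ Finset.range (m / 2 + 1), b (m - 2 * k)) = 2 ^ m + pp m := by
  intro m
  induction m using Nat.strong_induction_on with
  | _ m ih =>
    intro hm
    match m, hm with
    | 1, _ => norm_num [b, pp]
    | 2, _ =>
      rw [show (2:ℕ)/2 + 1 = 2 from rfl, Finset.sum_range_succ, Finset.sum_range_succ]
      norm_num [b, pp]
    | (n + 3), _ =>
      have hn : 1 ≤ n + 1 := by omega
      have key := ih (n + 1) (by omega) hn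
      have hsplit : ∑ k ∈ Finset.range ((n + 3) / 2 + 1), b (n + 3 - 2 * k)
          = b (n + 3) + ∑ k ∈ Finset.range ((n + 1) / 2 + 1), b (n + 1 - 2 * k) := by
        rw [show (n + 3) / 2 + 1 = ((n + 1) / 2 + 1) + 1 by omega, Finset.sum_range_succ']
        have : ∀ k, b (n + 3 - 2 * (k + 1)) = b (n + 1 - 2 * k) := by
          intro k; congr 1; omega
        simp only [this, Nat.mul_zero, Nat.sub_zero]
        ring
      rw [hsplit, mul_add, b_eq (n + 3) (by omega), key,
        show n + 3 = (n + 1) + 2 from rfl, pp_step (n + 1),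
        show n + 1 + 2 - 2 = n + 1 by omega]
      ring

theorem total_count_sv1 (m : ℕ) (hm : 1 ≤ m) :
    21 * (2 * (((A ^ (m - 1)).mulVec ![0, 0, 1]) 1 + ((A ^ (m - 1)).mulVec ![0, 0, 1]) 2) +
        ((B ^ (m - 1)).mulVec ![0, 0, 0, 1]) 3 +
        ∑ k ∈ Finset.range (m / 2 + 1), b (m - 2 * k)) =
      22 * 2 ^ m + (if m % 6 = 0 then -43 else if m % 6 = 1 then 19 else if m % 6 = 2 then 17
        else if m % 6 = 3 then -29 else if m % 6 = 4 then 5 else 31) := by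
  obtain ⟨n, rfl⟩ : ∃ n, m = n + 1 := ⟨m - 1, by omega⟩
  have hA1 := (PA n).2.1
  have hA2 := (PA n).2.2
  have hB3 := (PB n).2.2.2
  have hS := LS (n + 1) (by omega)
  simp only [Nat.add_sub_cancel] at *
  have lhs_eq : 21 * (2 * (((A ^ n).mulVec ![0, 0, 1]) 1 + ((A ^ n).mulVec ![0, 0, 1]) 2) +
        ((B ^ n).mulVec ![0, 0, 0, 1]) 3 +
        ∑ k ∈ Finset.range ((n + 1) / 2 + 1), b (n + 1 - 2 * k)) =
      6 * (7 * ((A ^ n).mulVec ![0, 0, 1]) 1) + 6 * (7 * ((A ^ n).mulVec ![0, 0, 1]) 2) +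
      3 * (7 * ((B ^ n).mulVec ![0, 0, 0, 1]) 3) +
      21 * (∑ k ∈ Finset.range ((n + 1) / 2 + 1), b (n + 1 - 2 * k)) := by ring
  rw [lhs_eq, hA1, hA2, hB3, hS]
  have hc : n % 6 = 0 ∨ n % 6 = 1 ∨ n % 6 = 2 ∨ n % 6 = 3 ∨ n % 6 = 4 ∨ n % 6 = 5 := by omega
  rcases hc with h | h | h | h | h | h <;>
    simp only [ρ, s3, pp, h, show (n+1) % 3 = (n%6+1) % 3 by omega,
      show (n+2) % 3 = (n%6+2) % 3 by omega, show n % 3 = n%6 % 3 by omega,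
      show (n+1) % 6 = (n%6+1) % 6 by omega] <;> norm_num <;> ring
end
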